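/- With the notation of the fractional Beatty setup: for every positive integer N, R(qN − 1) = pN − ⌈p/q⌉ if p₁ < p₀, and R(qN − 1) = pN − ⌊p/q⌋ if p₁ ≥ p₀. -/

import Mathlib

open scoped BigOperators

/-- The number of positive integers `n` with `⌊n·α + β⌋ = N`, i.e. the multiplicity
of `N` in the Beatty sequence `S(α,β)`. -/
noncomputable def beattyCount (α β : ℝ) (N : ℤ) : ℕ :=
  Nat.card {n : ℕ // 0 < n ∧ ⌊(n : ℝ) * α + β⌋ = N}

/-- `r(N)`: the number of pairs `(i, n)`, `i ∈ {1,2}`, `n ≥ 1`, with `⌊n·αᵢ⌋ = N`. -/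
noncomputable def fracBeattyR (α₁ α₂ : ℝ) (N : ℤ) : ℕ :=
  beattyCount α₁ 0 N + beattyCount α₂ 0 N

/-- `R(N) = Σ_{M=1}^N r(M)` (so `R(0) = 0`). -/
noncomputable def fracBeattyRsum (α₁ α₂ : ℝ) (n : ℕ) : ℕ :=
  ∑ M ∈ Finset.Icc 1 n, fracBeattyR α₁ α₂ (M : ℤ)

private lemma irr_ceil_eq {x : ℝ} (h : Irrational x) : ⌈x⌉ = ⌊x⌋ + 1 := by
  rw [Int.ceil_eq_iff]
  have h1 : (⌊x⌋ : ℝ) ≤ x := Int.floor_le x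
  have h2 : x ≠ (⌊x⌋ : ℝ) := h.ne_int ⌊x⌋
  have h3 : (⌊x⌋ : ℝ) < x := lt_of_le_of_ne h1 (Ne.symm h2)
  have h4 := (Int.lt_floor_add_one x).le
  constructor <;> push_cast <;> linarith

private lemma beattyCount_eq (α : ℝ) (h0 : 0 < α) (hirr : Irrational α)
    (M : ℕ) (hM : 1 ≤ M) :
    (beattyCount α 0 (M : ℤ) : ℤ) = ⌊((M : ℝ) + 1) / α⌋ - ⌊(M : ℝ) / α⌋ := by
  have hM0 : (0:ℝ) < (M:ℝ) := by exact_mod_cast hM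
  have hMne : M ≠ 0 := by omega
  have hq0 : (0:ℝ) < (M:ℝ)/α := div_pos hM0 h0
  have hfl0 : 0 ≤ ⌊(M:ℝ)/α⌋ := Int.floor_nonneg.2 hq0.le
  have hmono : ⌊(M:ℝ)/α⌋ ≤ ⌊((M:ℝ)+1)/α⌋ := by
    apply Int.floor_le_floor
    gcongr
    linarith
  set a := (⌊(M:ℝ)/α⌋).toNat with ha
  set b := (⌊((M:ℝ)+1)/α⌋).toNat with hb
  have haz : (a : ℤ) = ⌊(M:ℝ)/α⌋ := Int.toNat_of_nonneg hfl0
  have hbz : (b : ℤ) = ⌊((M:ℝ)+1)/α⌋ := Int.toNat_of_nonneg (le_trans hfl0 hmono)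
  have hirrM : Irrational ((M:ℝ)/α) := by
    rw [div_eq_mul_inv]
    exact hirr.inv.natCast_mul hMne
  have hset : {n : ℕ | 0 < n ∧ ⌊(n:ℝ) * α + 0⌋ = (M:ℤ)} = ↑(Finset.Ioc a b) := by
    ext n
    simp only [Set.mem_setOf_eq, Finset.coe_Ioc, Set.mem_Ioc, add_zero]
    constructor
    · rintro ⟨hn, hfl⟩
      have h := Int.floor_eq_iff.1 hfl
      push_cast at h
      obtain ⟨hle, hlt⟩ := h
      have hle' : (M:ℝ)/α ≤ n := (div_le_iff₀ h0).2 (by linarith [mul_comm (n:ℝ) α])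
      have hne : (M:ℝ)/α ≠ (n:ℝ) := hirrM.ne_nat n
      have hlt' : (M:ℝ)/α < n := lt_of_le_of_ne hle' hne
      have hub : (n:ℝ) ≤ ((M:ℝ)+1)/α := (le_div_iff₀ h0).2 (by linarith)
      constructor
      · have : ⌊(M:ℝ)/α⌋ < (n:ℤ) := Int.floor_lt.2 (by exact_mod_cast hlt')
        omega
      · have : (n:ℤ) ≤ ⌊((M:ℝ)+1)/α⌋ := Int.le_floor.2 (by exact_mod_cast hub)
        omega
    · rintro ⟨han, hnb⟩
      have hn : 0 < n := by omega
      have h1 : ⌊(M:ℝ)/α⌋ < (n:ℤ) := by omega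
      have h1' : (M:ℝ)/α < (n:ℝ) := by exact_mod_cast Int.floor_lt.1 h1
      have h2 : (n:ℤ) ≤ ⌊((M:ℝ)+1)/α⌋ := by omega
      have h2' : (n:ℝ) ≤ ((M:ℝ)+1)/α := by exact_mod_cast Int.le_floor.1 h2
      have hlo : (M:ℝ) ≤ (n:ℝ) * α := by
        have := (div_lt_iff₀ h0).1 h1'
        linarith [mul_comm (n:ℝ) α]
      have hup : (n:ℝ) * α ≤ (M:ℝ) + 1 := by
        have := (le_div_iff₀ h0).1 h2'
        linarith
      have hirrn : Irrational ((n:ℝ) * α) := hirr.natCast_mul (by omega)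
      have hne : (n:ℝ) * α ≠ (M:ℝ) + 1 := by
        have := hirrn.ne_int ((M:ℤ) + 1)
        push_cast at this
        exact this
      refine ⟨hn, ?_⟩
      rw [Int.floor_eq_iff]
      push_cast
      exact ⟨hlo, lt_of_le_of_ne hup hne⟩
  have hcard : beattyCount α 0 (M:ℤ) = b - a := by
    have : beattyCount α 0 (M:ℤ)
        = Set.ncard {n : ℕ | 0 < n ∧ ⌊(n:ℝ) * α + 0⌋ = (M:ℤ)} :=
      Nat.card_coe_set_eq _
    rw [this, hset, Set.ncard_coe_finset, Nat.card_Ioc]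
  have hab : a ≤ b := by omega
  rw [hcard]
  push_cast [hab]
  omega

private lemma beattySum_eq (α : ℝ) (h0 : 0 < α) (hirr : Irrational α) (n : ℕ) :
    ((∑ M ∈ Finset.Icc 1 n, beattyCount α 0 (M : ℤ)) : ℤ)
      = ⌊((n : ℝ) + 1) / α⌋ - ⌊1 / α⌋ := by
  have step : ∀ M ∈ Finset.Icc 1 n,
      (beattyCount α 0 (M : ℤ) : ℤ)
        = (fun m : ℕ => ⌊(m : ℝ) / α⌋) (M + 1) - (fun m : ℕ => ⌊(m : ℝ) / α⌋) M := by
    intro M hM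
    rw [beattyCount_eq α h0 hirr M (Finset.mem_Icc.1 hM).1]
    push_cast
    ring_nf
  calc ((∑ M ∈ Finset.Icc 1 n, beattyCount α 0 (M : ℤ)) : ℤ)
      = ∑ M ∈ Finset.Icc 1 n, (beattyCount α 0 (M : ℤ) : ℤ) := by norm_cast
    _ = ∑ M ∈ Finset.Icc 1 n,
        ((fun m : ℕ => ⌊(m : ℝ) / α⌋) (M + 1) - (fun m : ℕ => ⌊(m : ℝ) / α⌋) M) :=
      Finset.sum_congr rfl step
    _ = ∑ i ∈ Finset.range n,
        ((fun m : ℕ => ⌊(m : ℝ) / α⌋) (1 + i + 1) - (fun m : ℕ => ⌊(m : ℝ) / α⌋) (1 + i)) := by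
      rw [← Finset.Ico_add_one_right_eq_Icc, Finset.sum_Ico_eq_sum_range]
      simp
    _ = ∑ i ∈ Finset.range n,
        ((fun i : ℕ => ⌊((1 + i : ℕ) : ℝ) / α⌋) (i + 1) - (fun i : ℕ => ⌊((1 + i : ℕ) : ℝ) / α⌋) i) := by
      apply Finset.sum_congr rfl
      intro i _
      simp only []
      norm_num [add_comm, add_assoc, add_left_comm]
    _ = ⌊((1 + n : ℕ) : ℝ) / α⌋ - ⌊((1 + 0 : ℕ) : ℝ) / α⌋ :=
      Finset.sum_range_sub (fun i : ℕ => ⌊((1 + i : ℕ) : ℝ) / α⌋) n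
    _ = ⌊((n : ℝ) + 1) / α⌋ - ⌊1 / α⌋ := by push_cast; ring_nf

theorem fractional_beatty_partial_sums (p q : ℕ) (hp : 0 < p) (hq : 0 < q)
    (hpq : Nat.Coprime p q) (α₁ α₂ : ℝ) (h1 : 0 < α₁) (h2 : 0 < α₂)
    (hi1 : Irrational α₁) (hi2 : Irrational α₂)
    (hsum : 1 / α₁ + 1 / α₂ = (p : ℝ) / q)
    (p₁ : ℕ) (hp₁ : p₁ < q)
    (hfr₁ : (p₁ : ℝ) / q < Int.fract (1 / α₁))
    (hfr₂ : Int.fract (1 / α₁) < ((p₁ : ℝ) + 1) / q) :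
    ∀ N : ℕ, 1 ≤ N →
      (p₁ < p % q →
        (fracBeattyRsum α₁ α₂ (q * N - 1) : ℤ) = (p : ℤ) * N - ⌈(p : ℚ) / q⌉) ∧
      (p % q ≤ p₁ →
        (fracBeattyRsum α₁ α₂ (q * N - 1) : ℤ) = (p : ℤ) * N - ⌊(p : ℚ) / q⌋) := by
  intro N hN
  have hq0 : (q:ℝ) ≠ 0 := by positivity
  have hqN : 1 ≤ q * N := Nat.one_le_iff_ne_zero.2 (by positivity)
  set m : ℕ := q * N - 1 with hm
  have hm1 : ((m : ℝ) + 1) = (q : ℝ) * N := by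
    have : (m : ℕ) + 1 = q * N := by omega
    calc ((m : ℝ) + 1) = (((m + 1 : ℕ)) : ℝ) := by push_cast; ring
      _ = (q:ℝ) * N := by rw [this]; push_cast; ring
  -- total sum
  have hRsum : (fracBeattyRsum α₁ α₂ m : ℤ)
      = (⌊((m : ℝ) + 1)/α₁⌋ - ⌊1/α₁⌋) + (⌊((m : ℝ) + 1)/α₂⌋ - ⌊1/α₂⌋) := by
    have e1 := beattySum_eq α₁ h1 hi1 m
    have e2 := beattySum_eq α₂ h2 hi2 m
    unfold fracBeattyRsum fracBeattyR
    rw [Finset.sum_add_distrib]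
    push_cast at e1 e2 ⊢
    linarith [e1, e2]
  -- irrationality of q*N/α₁
  have hiθ1 : Irrational (1/α₁) := by rw [one_div]; exact hi1.inv
  have hirrx : Irrational ((q:ℝ) * N / α₁) := by
    have : ((q * N : ℕ) : ℝ) ≠ 0 := by
      push_cast; positivity
    have h := (hi1.inv.natCast_mul (m := q * N) (by positivity))
    rw [← div_eq_mul_inv] at h
    convert h using 2
    push_cast; ring
  -- the second floor
  have key1 : ((m : ℝ) + 1)/α₂ = (p:ℝ) * N - ((m : ℝ) + 1)/α₁ := by
    have h2' : 1/α₂ = (p:ℝ)/q - 1/α₁ := by linarith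
    rw [hm1]
    rw [div_eq_mul_one_div, h2', div_eq_mul_one_div ((q:ℝ)*N) α₁]
    field_simp
  have key2 : ⌊((m : ℝ) + 1)/α₂⌋ = (p:ℤ) * N - ⌊((m : ℝ) + 1)/α₁⌋ - 1 := by
    rw [key1, hm1]
    have : (p:ℝ) * N - (q:ℝ) * N / α₁ = ((((p:ℤ) * N) : ℤ) : ℝ) + (-( (q:ℝ) * N / α₁)) := by
      push_cast; ring
    rw [this, Int.floor_intCast_add, Int.floor_neg, irr_ceil_eq hirrx]
    ring
  -- floor of 1/α₂
  set k : ℤ := ((p / q : ℕ) : ℤ) with hk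
  set p₀ : ℕ := p % q with hp₀
  have hpdm : p = q * (p / q) + p₀ := (Nat.div_add_mod p q).symm
  have hpR : (p:ℝ) = (q:ℝ) * (k:ℝ) + (p₀:ℝ) := by
    rw [hk]
    exact_mod_cast hpdm
  have hkq : (p:ℝ)/q = (k:ℝ) + (p₀:ℝ)/q := by
    rw [hpR, add_div, mul_comm, mul_div_assoc, div_self hq0, mul_one]
  have hfr0 : (0:ℝ) ≤ (p₁:ℝ)/q := by positivity
  have hfrlt1 : Int.fract (1/α₁) < 1 := Int.fract_lt_one _
  have hfl : 1/α₁ = (⌊1/α₁⌋ : ℝ) + Int.fract (1/α₁) := (Int.floor_add_fract _).symm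
  have h1α2 : 1/α₂ = (p:ℝ)/q - 1/α₁ := by linarith
  have hp₀q : (p₀:ℝ)/q < 1 := by
    rw [div_lt_one (by positivity)]
    exact_mod_cast Nat.mod_lt p hq
  constructor
  · -- case p₁ < p₀
    intro hcase
    have hle : ((p₁:ℝ)+1)/q ≤ (p₀:ℝ)/q := by
      apply div_le_div_of_nonneg_right _ (by positivity)
      have : p₁ + 1 ≤ p₀ := hcase
      exact_mod_cast this
    have hflα2 : ⌊1/α₂⌋ = k - ⌊1/α₁⌋ := by
      rw [Int.floor_eq_iff]
      rw [h1α2, hkq]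
      push_cast
      constructor <;> linarith [hfl, hfr₁, hfr₂, hle, hfr0, hfrlt1, hp₀q]
    have hceil : ⌈(p : ℚ) / q⌉ = k + 1 := by
      have hpQ : (p:ℚ) = (q:ℚ) * (k:ℚ) + (p₀:ℚ) := by
        rw [hk]
        exact_mod_cast hpdm
      have hq0' : (q:ℚ) ≠ 0 := by positivity
      have hkqQ : (p:ℚ)/q = (k:ℚ) + (p₀:ℚ)/q := by
        rw [hpQ, add_div, mul_comm, mul_div_assoc, div_self hq0', mul_one]
      rw [Int.ceil_eq_iff, hkqQ]
      have hq0' : (q:ℚ) ≠ 0 := by positivity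
      have h01 : (0:ℚ) < (p₀:ℚ)/q := by
        apply div_pos
        · exact_mod_cast Nat.pos_of_ne_zero (by omega)
        · exact_mod_cast hq
      have h02 : (p₀:ℚ)/q < 1 := by
        rw [div_lt_one (by exact_mod_cast hq : (0:ℚ) < q)]
        exact_mod_cast Nat.mod_lt p hq
      push_cast
      constructor <;> linarith
    rw [hRsum, key2, hflα2, hceil]
    ring
  · -- case p₀ ≤ p₁
    intro hcase
    have hle : (p₀:ℝ)/q ≤ (p₁:ℝ)/q := by
      apply div_le_div_of_nonneg_right _ (by positivity)
      exact_mod_cast hcase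
    have hflα2 : ⌊1/α₂⌋ = k - ⌊1/α₁⌋ - 1 := by
      rw [Int.floor_eq_iff]
      rw [h1α2, hkq]
      push_cast
      have hp₀0 : (0:ℝ) ≤ (p₀:ℝ)/q := by positivity
      constructor <;> linarith [hfl, hfr₁, hfr₂, hle, hfr0, hfrlt1, hp₀q]
    have hfloorQ : ⌊(p : ℚ) / q⌋ = k := by
      have hpQ : (p:ℚ) = (q:ℚ) * (k:ℚ) + (p₀:ℚ) := by
        rw [hk]
        exact_mod_cast hpdm
      have hq0' : (q:ℚ) ≠ 0 := by positivity
      have hkqQ : (p:ℚ)/q = (k:ℚ) + (p₀:ℚ)/q := by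
        rw [hpQ, add_div, mul_comm, mul_div_assoc, div_self hq0', mul_one]
      rw [Int.floor_eq_iff, hkqQ]
      have h01 : (0:ℚ) ≤ (p₀:ℚ)/q := by positivity
      have h02 : (p₀:ℚ)/q < 1 := by
        rw [div_lt_one (by exact_mod_cast hq : (0:ℚ) < q)]
        exact_mod_cast Nat.mod_lt p hq
      push_cast
      constructor <;> linarith
    rw [hRsum, key2, hflα2, hfloorQ]
    ring
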